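/- For the PEG G5 with the single rule E ← E₁ + E₂ / E₂ * E₂ / n (where the subscripts are precedence levels), in the precedence-level left-recursive extended semantics with the empty memoization table: matching E₁ against the subject n*n*n yields (ε, E[E[n]*E[E[n]*E[n]]]), i.e., the * operator associates to the right. -/
import Mathlib


/-- Parsing expressions over non-terminals `N` and terminals `T`. -/
inductive PExp (N T : Type) : Type where
  | empty : PExp N T
  | term : T → PExp N T
  | var : N → PExp N T
  | seq : PExp N T → PExp N T → PExp N T
  | choice : PExp N T → PExp N T → PExp N T
  | star : PExp N T → PExp N T
  | nott : PExp N T → PExp N T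

/-- A PEG: a rule for every non-terminal and a starting expression.
(A PEG whose `prod` is a total function is a closed PEG.) -/
structure PEG (N T : Type) where
  prod : N → PExp N T
  start : PExp N T

/-- Symbols of parse strings: terminals and tagged brackets `A[...]`. -/
inductive PSym (N T : Type) : Type where
  | t : T → PSym N T
  | node : N → List (PSym N T) → PSym N T

/-- Parse strings. -/
abbrev PStr (N T : Type) := List (PSym N T)

/-- Result of a match: `fail`, or a pair (remaining suffix, parse string). -/
inductive Res (N T : Type) : Type where
  | fail : Res N T
  | ok : List T → PStr N T → Res N T
/-- Parsing expressions whose non-terminal occurrences carry precedence levels. -/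
inductive PExpP (N T : Type) : Type where
  | empty : PExpP N T
  | term : T → PExpP N T
  | var : N → ℕ → PExpP N T
  | seq : PExpP N T → PExpP N T → PExpP N T
  | choice : PExpP N T → PExpP N T → PExpP N T
  | star : PExpP N T → PExpP N T
  | nott : PExpP N T → PExpP N T

/-- A PEG with precedence levels. -/
structure PEGP (N T : Type) where
  prod : N → PExpP N T
  start : PExpP N T

/-- Memoization-table entries: `fail` or a triple (suffix, parse string, level). -/
inductive ResP (N T : Type) : Type where
  | fail : ResP N T
  | ok : List T → PStr N T → ℕ → ResP N T

/-- Forget the precedence level of a table entry. -/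
def ResP.toRes {N T : Type} : ResP N T → Res N T
  | ResP.fail => Res.fail
  | ResP.ok y t _ => Res.ok y t

/-- Memoization tables whose successful entries carry precedence levels. -/
abbrev MemoP (N T : Type) := N → List T → Option (ResP N T)

/-- `L[(A,s) ↦ r]`. -/
def MemoP.update {N T : Type} [DecidableEq N] [DecidableEq T]
    (L : MemoP N T) (A : N) (s : List T) (r : ResP N T) : MemoP N T :=
  fun B u => if B = A ∧ u = s then some r else L B u

/-- The empty memoization table. -/
def MemoP.empty {N T : Type} : MemoP N T := fun _ _ => none

mutual
/-- The precedence-level left-recursive extended semantics `G[p] s L ⇝ r`. -/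
inductive LMatchP {N T : Type} [DecidableEq N] [DecidableEq T] (G : PEGP N T) :
    PExpP N T → List T → MemoP N T → Res N T → Prop where
  | empty1 : LMatchP G .empty s L (.ok s [])
  | char1 : LMatchP G (.term a) (a :: s) L (.ok s [.t a])
  | char2 : b ≠ a → LMatchP G (.term b) (a :: s) L .fail
  | char3 : LMatchP G (.term a) [] L .fail
  | lvar1 : L A s = none →
      LMatchP G (G.prod A) s (MemoP.update L A s .fail) (.ok s1 t1) →
      IncP G A s (MemoP.update L A s (.ok s1 t1 k)) (.ok s2 t2) →
      LMatchP G (.var A k) s L (.ok s2 [.node A t2])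
  | lvar2 : L A s = none →
      LMatchP G (G.prod A) s (MemoP.update L A s .fail) .fail →
      LMatchP G (.var A k) s L .fail
  | lvar3 : L A s = some .fail → LMatchP G (.var A k) s L .fail
  | lvar4 : L A s = some (.ok y t k') → k' ≤ k →
      LMatchP G (.var A k) s L (.ok y [.node A t])
  | lvar5 : L A s = some (.ok y t k') → k < k' →
      LMatchP G (.var A k) s L .fail
  | con1 : LMatchP G p1 s L (.ok s1 t1) → LMatchP G p2 s1 L (.ok s2 t2) →
      LMatchP G (.seq p1 p2) s L (.ok s2 (t1 ++ t2))
  | con2 : LMatchP G p1 s L (.ok s1 t1) → LMatchP G p2 s1 L .fail →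
      LMatchP G (.seq p1 p2) s L .fail
  | con3 : LMatchP G p1 s L .fail → LMatchP G (.seq p1 p2) s L .fail
  | ord1 : LMatchP G p1 s L (.ok s1 t1) → LMatchP G (.choice p1 p2) s L (.ok s1 t1)
  | ord2 : LMatchP G p1 s L .fail → LMatchP G p2 s L .fail →
      LMatchP G (.choice p1 p2) s L .fail
  | ord3 : LMatchP G p1 s L .fail → LMatchP G p2 s L (.ok s1 t1) →
      LMatchP G (.choice p1 p2) s L (.ok s1 t1)
  | not1 : LMatchP G p s L .fail → LMatchP G (.nott p) s L (.ok s [])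
  | not2 : LMatchP G p s L (.ok s1 t1) → LMatchP G (.nott p) s L .fail
  | rep1 : LMatchP G p s L .fail → LMatchP G (.star p) s L (.ok s [])
  | rep2 : LMatchP G p s L (.ok s1 t1) → LMatchP G (.star p) s1 L (.ok s2 t2) →
      LMatchP G (.star p) s L (.ok s2 (t1 ++ t2))

/-- The auxiliary bound-increasing relation `G[P(A)] s L ⇝INC r`. -/
inductive IncP {N T : Type} [DecidableEq N] [DecidableEq T] (G : PEGP N T) :
    N → List T → MemoP N T → Res N T → Prop where
  | inc1 : y ≠ [] →
      LMatchP G (G.prod A) (x ++ y ++ z ++ w)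
        (MemoP.update L A (x ++ y ++ z ++ w) (.ok (y ++ z ++ w) t1 k)) (.ok (z ++ w) t2) →
      IncP G A (x ++ y ++ z ++ w)
        (MemoP.update L A (x ++ y ++ z ++ w) (.ok (z ++ w) t2 k)) (.ok w t3) →
      IncP G A (x ++ y ++ z ++ w)
        (MemoP.update L A (x ++ y ++ z ++ w) (.ok (y ++ z ++ w) t1 k)) (.ok w t3)
  | inc2 : L A s = some r → LMatchP G (G.prod A) s L .fail →
      IncP G A s L (ResP.toRes r)
  | inc3 :
      LMatchP G (G.prod A) (x ++ y ++ z)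
        (MemoP.update L A (x ++ y ++ z) (.ok z t1 k)) (.ok (y ++ z) t2) →
      IncP G A (x ++ y ++ z)
        (MemoP.update L A (x ++ y ++ z) (.ok z t1 k)) (.ok z t1)
end

/-- The alphabet `{n, +, *}`. -/
inductive T5 : Type where
  | n : T5
  | plus : T5
  | times : T5
deriving DecidableEq

/-- The PEG `E ← E₁ + E₂ / E₂ * E₂ / n` (single non-terminal `E`, modelled by
`Unit`; subscripts are precedence levels), with starting expression `E₁`. -/
def G5 : PEGP Unit T5 where
  prod := fun _ => PExpP.choice
    (PExpP.seq (PExpP.seq (PExpP.var () 1) (PExpP.term T5.plus)) (PExpP.var () 2))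
    (PExpP.choice
      (PExpP.seq (PExpP.seq (PExpP.var () 2) (PExpP.term T5.times)) (PExpP.var () 2))
      (PExpP.term T5.n))
  start := PExpP.var () 1

/-- The parse string `E[n]`. -/
def E5n : PSym Unit T5 := PSym.node () [PSym.t T5.n]

/-- Seed parse: with `(E, n·r) ↦ fail` in the table, `P(E)` on `n·r` matches the
third alternative `n`. -/
private lemma seedP {L : MemoP Unit T5} {r : List T5}
    (h : L () (T5.n :: r) = some .fail) :
    LMatchP G5 (G5.prod ()) (T5.n :: r) L (.ok r [.t T5.n]) :=
  .ord3 (.con3 (.con3 (.lvar3 h))) (.ord3 (.con3 (.con3 (.lvar3 h))) .char1)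

/-- With a fully-consuming level-2 entry in the table, `P(E)` on `n·r` matches
only the alternative `n`. -/
private lemma postP2 {L : MemoP Unit T5} {r : List T5} {t : PStr Unit T5}
    (h : L () (T5.n :: r) = some (.ok [] t 2)) :
    LMatchP G5 (G5.prod ()) (T5.n :: r) L (.ok r [.t T5.n]) :=
  .ord3 (.con3 (.con3 (.lvar5 h (by decide))))
    (.ord3 (.con3 (.con2 (.lvar4 h (le_refl 2)) .char3)) .char1)

/-- With a fully-consuming level-1 entry in the table, `P(E)` on `n·r` matches
only the alternative `n`. -/
private lemma postP1 {L : MemoP Unit T5} {r : List T5} {t : PStr Unit T5}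
    (h : L () (T5.n :: r) = some (.ok [] t 1)) :
    LMatchP G5 (G5.prod ()) (T5.n :: r) L (.ok r [.t T5.n]) :=
  .ord3 (.con3 (.con2 (.lvar4 h (le_refl 1)) .char3))
    (.ord3 (.con3 (.con2 (.lvar4 h (by decide)) .char3)) .char1)

private def s5l : List T5 := [T5.n, T5.times, T5.n, T5.times, T5.n]
private def s3l : List T5 := [T5.n, T5.times, T5.n]

/-- Table after the seed parse at `n*n*n`. -/
private def L1 : MemoP Unit T5 :=
  MemoP.update MemoP.empty () s5l (.ok [T5.times, T5.n, T5.times, T5.n] [.t T5.n] 1)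

/-- Table after the seed parse of the inner call at `n*n`. -/
private def L2 : MemoP Unit T5 :=
  MemoP.update L1 () s3l (.ok [T5.times, T5.n] [.t T5.n] 2)

/-- The parse string `E[n]*E[n]`. -/
private def T3l : PStr Unit T5 := [E5n, .t T5.times, E5n]

/-- The parse string `E[n]*E[E[n]*E[n]]`. -/
private def T5l : PStr Unit T5 := [E5n, .t T5.times, .node () T3l]

/-- `E₂` on `n` with table `L2` yields `E[n]`. -/
private lemma D1 : LMatchP G5 (PExpP.var () 2) [T5.n] L2 (.ok [] [.node () [.t T5.n]]) :=
  .lvar1 rfl (seedP rfl)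
    (IncP.inc3 (x := [T5.n]) (y := []) (z := []) (t1 := [.t T5.n])
      (t2 := [.t T5.n]) (k := 2) (L := L2) (postP2 rfl))

/-- `E₂` on `n*n` with table `L1` yields `E[E[n]*E[n]]`. -/
private lemma D3 : LMatchP G5 (PExpP.var () 2) s3l L1 (.ok [] [.node () T3l]) := by
  refine .lvar1 rfl (seedP rfl) ?_
  refine IncP.inc1 (A := ()) (x := [T5.n]) (y := [T5.times, T5.n]) (z := []) (w := [])
    (L := L1) (t1 := [.t T5.n]) (k := 2) (t2 := T3l) (t3 := T3l) (by simp) ?_ ?_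
  · -- growth step: `P(E)` on `n*n` with table `L2` yields `E[n]*E[n]`
    exact .ord3 (.con3 (.con3 (.lvar5 rfl (by decide))))
      (.ord1 (.con1 (.con1
        (.lvar4 (y := [T5.times, T5.n]) (t := [.t T5.n]) (k' := 2) rfl (by decide))
        .char1) D1))
  · -- next iteration makes no progress
    exact IncP.inc3 (x := [T5.n]) (y := [T5.times, T5.n]) (z := []) (t1 := T3l)
      (t2 := [.t T5.n]) (k := 2) (L := L1) (postP2 rfl)

/-- Matching `E₁` against `n*n*n` with the empty memoization table consumes the
whole subject and yields `E[E[n]*E[E[n]*E[n]]]`: `*` is right-associative. -/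
theorem G5_times_right_assoc :
    LMatchP G5 (PExpP.var () 1) [T5.n, T5.times, T5.n, T5.times, T5.n] MemoP.empty
      (Res.ok []
        [PSym.node ()
          [E5n, PSym.t T5.times, PSym.node () [E5n, PSym.t T5.times, E5n]]]) := by
  refine .lvar1 rfl (seedP rfl) ?_
  refine IncP.inc1 (A := ()) (x := [T5.n]) (y := [T5.times, T5.n, T5.times, T5.n])
    (z := []) (w := []) (L := MemoP.empty) (t1 := [.t T5.n]) (k := 1) (t2 := T5l)
    (t3 := T5l) (by simp) ?_ ?_
  · -- growth step: `P(E)` on `n*n*n` with table `L1` yields `E[n]*E[E[n]*E[n]]`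
    exact .ord3 (.con3 (.con2
        (.lvar4 (y := [T5.times, T5.n, T5.times, T5.n]) (t := [.t T5.n]) (k' := 1)
          rfl (le_refl 1))
        (.char2 (by decide))))
      (.ord1 (.con1 (.con1
        (.lvar4 (y := [T5.times, T5.n, T5.times, T5.n]) (t := [.t T5.n]) (k' := 1)
          rfl (by decide))
        .char1) D3))
  · -- next iteration makes no progress
    exact IncP.inc3 (x := [T5.n]) (y := [T5.times, T5.n, T5.times, T5.n]) (z := [])
      (t1 := T5l) (t2 := [.t T5.n]) (k := 1) (L := MemoP.empty) (postP1 rfl)
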